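/- arXiv:2501.14286 — 5 statements merged into one kernel-verified Lean document; each statement's English description precedes it below -/
import Mathlib

section
/- Let φ_a: ℋ+wu ↪ 𝒢 be an extension of an embedding φ: ℋ ↪ 𝒢 of an edge-colored rooted graph ℋ, obtained by attaching a new vertex u to w by an edge of color r and embedding u at vertex a. Then for every X ⊆ V(𝒢)×[t], R(X,φ_a) − R(X,φ) = 1[(φ(w),r) ∈ X] − 1[a ∈ Γ_𝒢(X)]. -/
open Finset
open scoped Classical

noncomputable section

/-- Number of ordered adjacent pairs between `X` and `Y` in the graph `G`. -/
def epairs {V : Type*} (G : SimpleGraph V) (X Y : Finset V) : ℕ :=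
  ((X ×ˢ Y).filter fun p => G.Adj p.1 p.2).card

/-- `G` is `(p,β)`-jumbled. -/
def IsJumbled {V : Type*} (G : SimpleGraph V) (p β : ℝ) : Prop :=
  ∀ X Y : Finset V,
    |(epairs G X Y : ℝ) - p * X.card * Y.card| ≤ β * Real.sqrt (X.card * Y.card)

/-- `G` is `s`-joined. -/
def IsJoined {V : Type*} (G : SimpleGraph V) (s : ℕ) : Prop :=
  ∀ X Y : Finset V, s ≤ X.card → s ≤ Y.card → 0 < epairs G X Y

/-- Ordered adjacent pairs between `X ⊆ V × [t]` and `Y ⊆ V` in the auxiliary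
bipartite graph of the family `𝒢`. -/
def famPairs {V : Type*} {t : ℕ} (𝒢 : Fin t → SimpleGraph V)
    (X : Finset (V × Fin t)) (Y : Finset V) : ℕ :=
  ((X ×ˢ Y).filter fun p => (𝒢 p.1.2).Adj p.1.1 p.2).card

/-- The family `𝒢` is `(p,β)`-jumbled (its auxiliary bipartite graph is bijumbled). -/
def FamJumbled {V : Type*} {t : ℕ} (𝒢 : Fin t → SimpleGraph V) (p β : ℝ) : Prop :=
  ∀ (X : Finset (V × Fin t)) (Y : Finset V),
    |(famPairs 𝒢 X Y : ℝ) - p * X.card * Y.card| ≤ β * Real.sqrt (X.card * Y.card)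

/-- The family `𝒢` is `s`-joined (its auxiliary bipartite graph is bijoined). -/
def FamJoined {V : Type*} {t : ℕ} (𝒢 : Fin t → SimpleGraph V) (s : ℕ) : Prop :=
  ∀ (X : Finset (V × Fin t)) (Y : Finset V), s ≤ X.card → s ≤ Y.card →
    0 < famPairs 𝒢 X Y

/-- `Γ_𝒢(X)`: the family neighbourhood of `X ⊆ V × [t]`. -/
def famNbhd {V : Type*} [Fintype V] {t : ℕ} (𝒢 : Fin t → SimpleGraph V)
    (X : Finset (V × Fin t)) : Finset V :=
  univ.filter fun v => ∃ p ∈ X, (𝒢 p.2).Adj p.1 v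

/-- A `[t]`-edge-coloured rooted graph: colour classes `graph i`, a set of roots,
and for each non-root vertex a parent joined to it by an edge of colour `parentColor`. -/
structure ColoredRootedGraph (A : Type*) (t : ℕ) where
  graph : Fin t → SimpleGraph A
  isRoot : A → Bool
  parent : A → A
  parentColor : A → Fin t
  parent_adj : ∀ a, isRoot a = false → (graph (parentColor a)).Adj a (parent a)

/-- The degree of `a` in colour `i` within the vertex subset `S`. -/
def monDegOn {A : Type*} {t : ℕ} (H : Fin t → SimpleGraph A)
    (S : Finset A) (a : A) (i : Fin t) : ℕ :=
  (S.filter fun b => (H i).Adj a b).card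

/-- `φ` is an embedding of the colour classes `H` into the family `𝒢`. -/
def IsColEmbedding {A V : Type*} {t : ℕ} (𝒢 : Fin t → SimpleGraph V)
    (H : Fin t → SimpleGraph A) (φ : A → V) : Prop :=
  Function.Injective φ ∧ ∀ i a b, (H i).Adj a b → (𝒢 i).Adj (φ a) (φ b)

/-- `P_φ(ℋ)` relative to the vertex subset `S`: pairs `(φ h, i)` with `h ∈ S` a
non-root vertex and `i` the colour of the edge from `h` to its parent. -/
def Pset {A V : Type*} {t : ℕ} (ℋ : ColoredRootedGraph A t)
    (S : Finset A) (φ : A → V) : Finset (V × Fin t) :=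
  (S.filter fun a => ℋ.isRoot a = false).image fun a => (φ a, ℋ.parentColor a)

/-- The quantity `R(X,φ)` for the embedding `φ` of the part of `ℋ` induced on `S`
into the family `𝒢` restricted to `V'`. -/
def Rfun {A V : Type*} [Fintype V] {t : ℕ} (𝒢 : Fin t → SimpleGraph V)
    (V' : Finset V) (ℋ : ColoredRootedGraph A t) (S : Finset A) (φ : A → V) (D : ℕ)
    (X : Finset (V × Fin t)) : ℤ :=
  (((famNbhd 𝒢 X ∩ V')) \ (S.image φ)).card
    - ∑ p ∈ X, ((D : ℤ) - ∑ a ∈ S.filter (fun a => φ a = p.1), (monDegOn ℋ.graph S a p.2 : ℤ))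
    - ((Pset ℋ S φ) ∩ X).card

/-- `φ` is an `(s,D)`-good embedding (of the part of `ℋ` on `S`, into `𝒢` restricted
to `V'`): `R(X,φ) ≥ 0` for every `X ⊆ V' × [t]` with `|X| ≤ s`. -/
def IsGood {A V : Type*} [Fintype V] {t : ℕ} (𝒢 : Fin t → SimpleGraph V)
    (V' : Finset V) (ℋ : ColoredRootedGraph A t) (S : Finset A) (φ : A → V)
    (s : ℝ) (D : ℕ) : Prop :=
  ∀ X : Finset (V × Fin t), (∀ p ∈ X, p.1 ∈ V') → (X.card : ℝ) ≤ s →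
    0 ≤ Rfun 𝒢 V' ℋ S φ D X

end


section Helpers
open Finset
variable {A : Type*} [Fintype A]

lemma card_filter_option (P : Option A → Prop) [DecidablePred P] :
    ((univ : Finset (Option A)).filter P).card
      = (if P none then 1 else 0) + ((univ : Finset A).filter fun x => P (some x)).card := by
  rw [Finset.card_filter, Finset.card_filter, Fintype.sum_option]

lemma sum_filter_option {M : Type*} [AddCommMonoid M] (P : Option A → Prop)
    [DecidablePred P] (f : Option A → M) :
    ∑ o ∈ (univ : Finset (Option A)).filter P, f o
      = (if P none then f none else 0)
        + ∑ x ∈ (univ : Finset A).filter (fun x => P (some x)), f (some x) := by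
  rw [Finset.sum_filter, Finset.sum_filter, Fintype.sum_option]

lemma ite_pair {V : Type*} {t : ℕ} (p : V × Fin t) (v : V) (i : Fin t) :
    (if v = p.1 then (if p.2 = i then (1:ℤ) else 0) else 0) = if p = (v, i) then 1 else 0 := by
  obtain ⟨p1, p2⟩ := p
  simp only [Prod.mk.injEq]
  by_cases h1 : v = p1 <;> by_cases h2 : p2 = i <;> simp [h1, h2, eq_comm] <;> tauto

end Helpers

/-- the change of `R(X,·)` under a one-vertex extension of a good
embedding: `R(X,φ_a) − R(X,φ) = 1[(φ(w),r) ∈ X] − 1[a ∈ Γ_𝒢(X)]`. -/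
theorem R_extension_formula {V A : Type*} [Fintype V] [Fintype A] {t : ℕ}
    (𝒢 : Fin t → SimpleGraph V) (D : ℕ)
    (ℋ : ColoredRootedGraph A t) (φ : A → V)
    (hemb : IsColEmbedding 𝒢 ℋ.graph φ)
    (w : A) (r : Fin t) (a : V)
    (ha : (𝒢 r).Adj (φ w) a) (hafresh : a ∉ Finset.univ.image φ)
    -- ℋ' is the rooted coloured graph ℋ + wu, with the new vertex `u = none`
    (ℋ' : ColoredRootedGraph (Option A) t)
    (hadj : ∀ i x y, (ℋ'.graph i).Adj (some x) (some y) ↔ (ℋ.graph i).Adj x y)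
    (hnew : ∀ i x, (ℋ'.graph i).Adj (some x) none ↔ (i = r ∧ x = w))
    (hroot : ∀ x, ℋ'.isRoot (some x) = ℋ.isRoot x)
    (hroot' : ℋ'.isRoot none = false)
    (hpar : ∀ x, ℋ'.parent (some x) = some (ℋ.parent x))
    (hpar' : ℋ'.parent none = some w)
    (hpc : ∀ x, ℋ'.parentColor (some x) = ℋ.parentColor x)
    (hpc' : ℋ'.parentColor none = r) :
    ∀ X : Finset (V × Fin t),
      Rfun 𝒢 Finset.univ ℋ' Finset.univ (fun o => o.elim a φ) D X
          - Rfun 𝒢 Finset.univ ℋ Finset.univ φ D X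
        = (if (φ w, r) ∈ X then 1 else 0) - (if a ∈ famNbhd 𝒢 X then 1 else 0) := by
  classical
  intro X
  set φ' : Option A → V := fun o => o.elim a φ with hφ'
  obtain ⟨hinj, hhom⟩ := hemb
  have hfresh : ∀ x : A, φ x ≠ a := by
    intro x hx
    exact hafresh (Finset.mem_image.2 ⟨x, Finset.mem_univ x, hx⟩)
  have hφn : φ' none = a := rfl
  have hφs : ∀ x : A, φ' (some x) = φ x := fun _ => rfl
  -- image of φ'
  have himg : (Finset.univ : Finset (Option A)).image φ'
      = insert a ((Finset.univ : Finset A).image φ) := by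
    ext v
    simp only [Finset.mem_image, Finset.mem_insert, Finset.mem_univ, true_and]
    constructor
    · rintro ⟨o, rfl⟩
      cases o with
      | none => exact Or.inl rfl
      | some x => exact Or.inr ⟨x, rfl⟩
    · rintro (rfl | ⟨x, rfl⟩)
      · exact ⟨none, rfl⟩
      · exact ⟨some x, rfl⟩
  set N := famNbhd 𝒢 X with hN
  -- term 1
  have h1 : ((N \ ((Finset.univ : Finset (Option A)).image φ')).card : ℤ)
      = ((N \ ((Finset.univ : Finset A).image φ)).card : ℤ)
        - (if a ∈ N then 1 else 0) := by
    rw [himg, Finset.sdiff_insert]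
    by_cases haN : a ∈ N
    · have hmem : a ∈ N \ ((Finset.univ : Finset A).image φ) :=
        Finset.mem_sdiff.2 ⟨haN, hafresh⟩
      rw [Finset.cast_card_erase_of_mem hmem, if_pos haN]
    · have hnm : a ∉ N \ ((Finset.univ : Finset A).image φ) := by
        simp [Finset.mem_sdiff, haN]
      rw [Finset.erase_eq_of_notMem hnm, if_neg haN]
      ring
  -- monochromatic degrees in ℋ'
  have mdnone : ∀ i : Fin t, (monDegOn ℋ'.graph Finset.univ none i : ℤ)
      = (if i = r then 1 else 0) := by
    intro i
    unfold monDegOn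
    rw [card_filter_option (fun b => (ℋ'.graph i).Adj none b)]
    have h0 : ¬ (ℋ'.graph i).Adj none none := (ℋ'.graph i).irrefl
    rw [if_neg h0]
    have hflt : ((Finset.univ : Finset A).filter fun x => (ℋ'.graph i).Adj none (some x))
        = (Finset.univ : Finset A).filter fun x => i = r ∧ x = w := by
      apply Finset.filter_congr
      intro x _
      rw [(ℋ'.graph i).adj_comm, hnew]
    rw [hflt]
    by_cases hi : i = r
    · subst hi
      have : ((Finset.univ : Finset A).filter fun x => i = i ∧ x = w)
          = (Finset.univ : Finset A).filter fun x => x = w := by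
        apply Finset.filter_congr; intro x _; simp
      rw [this]
      have hw1 : ((Finset.univ : Finset A).filter fun x => x = w) = {w} := by
        ext x; simp
      rw [hw1]
      simp
    · have : ((Finset.univ : Finset A).filter fun x => i = r ∧ x = w) = ∅ := by
        apply Finset.filter_false_of_mem; intro x _; tauto
      rw [this]
      simp [hi]
  have mdsome : ∀ (x : A) (i : Fin t), (monDegOn ℋ'.graph Finset.univ (some x) i : ℤ)
      = (monDegOn ℋ.graph Finset.univ x i : ℤ) + (if i = r ∧ x = w then 1 else 0) := by
    intro x i
    unfold monDegOn
    rw [card_filter_option (fun b => (ℋ'.graph i).Adj (some x) b)]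
    have h0 : ((Finset.univ : Finset A).filter fun y => (ℋ'.graph i).Adj (some x) (some y))
        = (Finset.univ : Finset A).filter fun y => (ℋ.graph i).Adj x y := by
      apply Finset.filter_congr
      intro y _
      rw [hadj]
    rw [h0, hnew]
    push_cast
    split <;> ring
  -- inner sums
  have innerEq : ∀ p : V × Fin t,
      (∑ o ∈ (Finset.univ : Finset (Option A)).filter (fun o => φ' o = p.1),
          (monDegOn ℋ'.graph Finset.univ o p.2 : ℤ))
      = (∑ x ∈ (Finset.univ : Finset A).filter (fun x => φ x = p.1),
          (monDegOn ℋ.graph Finset.univ x p.2 : ℤ))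
        + (if p = (φ w, r) then 1 else 0) + (if p = (a, r) then 1 else 0) := by
    intro p
    rw [sum_filter_option (fun o => φ' o = p.1)
        (fun o => (monDegOn ℋ'.graph Finset.univ o p.2 : ℤ))]
    have hA : (if φ' none = p.1 then (monDegOn ℋ'.graph Finset.univ none p.2 : ℤ) else 0)
        = if p = (a, r) then 1 else 0 := by
      simp only [hφn, mdnone]
      exact ite_pair p a r
    have hB : ∑ x ∈ (Finset.univ : Finset A).filter (fun x => φ' (some x) = p.1),
          (monDegOn ℋ'.graph Finset.univ (some x) p.2 : ℤ)
        = (∑ x ∈ (Finset.univ : Finset A).filter (fun x => φ x = p.1),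
            (monDegOn ℋ.graph Finset.univ x p.2 : ℤ))
          + (if p = (φ w, r) then 1 else 0) := by
      have hf : (Finset.univ : Finset A).filter (fun x => φ' (some x) = p.1)
          = (Finset.univ : Finset A).filter (fun x => φ x = p.1) := rfl
      rw [hf]
      have hcongr : ∀ x ∈ (Finset.univ : Finset A).filter (fun x => φ x = p.1),
          (monDegOn ℋ'.graph Finset.univ (some x) p.2 : ℤ)
          = (monDegOn ℋ.graph Finset.univ x p.2 : ℤ)
            + (if x = w then (if p.2 = r then 1 else 0) else 0) := by
        intro x _
        rw [mdsome]
        congr 1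
        by_cases hx : x = w <;> by_cases hr : p.2 = r <;> simp [hx, hr]
      rw [Finset.sum_congr rfl hcongr, Finset.sum_add_distrib,
        Finset.sum_ite_eq' _ w (fun _ => (if p.2 = r then 1 else 0 : ℤ))]
      congr 1
      simp only [Finset.mem_filter, Finset.mem_univ, true_and]
      exact ite_pair p (φ w) r
    rw [hA, hB]
    ring
  -- term 2
  have h2 : (∑ p ∈ X, ((D : ℤ) - ∑ o ∈ (Finset.univ : Finset (Option A)).filter
          (fun o => φ' o = p.1), (monDegOn ℋ'.graph Finset.univ o p.2 : ℤ)))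
      = (∑ p ∈ X, ((D : ℤ) - ∑ x ∈ (Finset.univ : Finset A).filter
          (fun x => φ x = p.1), (monDegOn ℋ.graph Finset.univ x p.2 : ℤ)))
        - (if (φ w, r) ∈ X then 1 else 0) - (if (a, r) ∈ X then 1 else 0) := by
    have hcongr : ∀ p ∈ X, ((D : ℤ) - ∑ o ∈ (Finset.univ : Finset (Option A)).filter
          (fun o => φ' o = p.1), (monDegOn ℋ'.graph Finset.univ o p.2 : ℤ))
        = ((D : ℤ) - ∑ x ∈ (Finset.univ : Finset A).filter
            (fun x => φ x = p.1), (monDegOn ℋ.graph Finset.univ x p.2 : ℤ))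
          - (if p = (φ w, r) then 1 else 0) - (if p = (a, r) then 1 else 0) := by
      intro p _
      rw [innerEq p]; ring
    rw [Finset.sum_congr rfl hcongr, Finset.sum_sub_distrib, Finset.sum_sub_distrib,
      Finset.sum_ite_eq' X (φ w, r) (fun _ => (1:ℤ)),
      Finset.sum_ite_eq' X (a, r) (fun _ => (1:ℤ))]
  -- Pset
  have hP : Pset ℋ' Finset.univ φ' = insert (a, r) (Pset ℋ Finset.univ φ) := by
    unfold Pset
    ext q
    simp only [Finset.mem_image, Finset.mem_filter, Finset.mem_univ, true_and,
      Finset.mem_insert]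
    constructor
    · rintro ⟨o, ho, rfl⟩
      cases o with
      | none => exact Or.inl (by rw [hpc', hφn])
      | some x =>
        exact Or.inr ⟨x, by rw [← hroot]; exact ho, by rw [hpc x, hφs x]⟩
    · rintro (rfl | ⟨x, hx, rfl⟩)
      · exact ⟨none, hroot', by rw [hpc', hφn]⟩
      · exact ⟨some x, by rw [hroot]; exact hx, by rw [hpc x, hφs x]⟩
  have hPa : (a, r) ∉ Pset ℋ Finset.univ φ := by
    unfold Pset
    simp only [Finset.mem_image, Finset.mem_filter, Finset.mem_univ, true_and]
    rintro ⟨x, -, hx⟩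
    exact hfresh x (congrArg Prod.fst hx)
  have h3 : (((Pset ℋ' Finset.univ φ') ∩ X).card : ℤ)
      = (((Pset ℋ Finset.univ φ) ∩ X).card : ℤ) + (if (a, r) ∈ X then 1 else 0) := by
    rw [hP]
    by_cases har : (a, r) ∈ X
    · rw [Finset.insert_inter_of_mem har, if_pos har,
        Finset.card_insert_of_notMem (fun h => hPa (Finset.mem_of_mem_inter_left h))]
      push_cast
      ring
    · rw [Finset.insert_inter_of_notMem har, if_neg har]
      ring
  -- assemble
  simp only [Rfun, Finset.inter_univ, ← hN, ← hφ']
  rw [h1, h2, h3]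
  ring
end

section
/- Suppose an embedding φ: ℋ ↪ 𝒢 satisfies: R(X,φ) ≥ 0 for all |X| ≤ 2s, and |Γ_𝒢(X)| > (D+1)|X| + |φ(ℋ)| whenever s < |X| ≤ 2s. If R(X,φ) = R(Y,φ) = 0 with |X|,|Y| ≤ s, then R(X∪Y,φ) = R(X∩Y,φ) = 0 and |X∪Y| ≤ s. -/
open Finset
open scoped Classical

/-- if `R(X,φ) ≥ 0` for all `|X| ≤ 2s` and `|Γ_𝒢(X)| > (D+1)|X| + |φ(ℋ)|`
for `s < |X| ≤ 2s`, then tight sets of size `≤ s` are closed under union and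
intersection, and their union still has size `≤ s`. -/
theorem tight_sets_closed {V A : Type*} [Fintype V] [Fintype A] {t : ℕ}
    (𝒢 : Fin t → SimpleGraph V) (s D : ℕ)
    (ℋ : ColoredRootedGraph A t) (φ : A → V)
    (hemb : IsColEmbedding 𝒢 ℋ.graph φ)
    (hgood : IsGood 𝒢 Finset.univ ℋ Finset.univ φ (2 * s : ℝ) D)
    (hexp : ∀ X : Finset (V × Fin t), s < X.card → X.card ≤ 2 * s →
      ((D + 1) * X.card + (Finset.univ.image φ).card : ℤ) < (famNbhd 𝒢 X).card) :
    ∀ X Y : Finset (V × Fin t),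
      Rfun 𝒢 Finset.univ ℋ Finset.univ φ D X = 0 →
      Rfun 𝒢 Finset.univ ℋ Finset.univ φ D Y = 0 →
      X.card ≤ s → Y.card ≤ s →
        Rfun 𝒢 Finset.univ ℋ Finset.univ φ D (X ∪ Y) = 0 ∧
        Rfun 𝒢 Finset.univ ℋ Finset.univ φ D (X ∩ Y) = 0 ∧
        (X ∪ Y).card ≤ s := by
  intro X Y hX hY hXs hYs
  classical
  set M := (Finset.univ.image φ) with hM
  have hnb_union : famNbhd 𝒢 (X ∪ Y) = famNbhd 𝒢 X ∪ famNbhd 𝒢 Y := by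
    ext v
    simp only [famNbhd, mem_filter, mem_union, mem_univ, true_and]
    constructor
    · rintro ⟨p, hp | hp, h⟩
      · exact Or.inl ⟨p, hp, h⟩
      · exact Or.inr ⟨p, hp, h⟩
    · rintro (⟨p, hp, h⟩ | ⟨p, hp, h⟩)
      · exact ⟨p, Or.inl hp, h⟩
      · exact ⟨p, Or.inr hp, h⟩
  have hnb_inter : famNbhd 𝒢 (X ∩ Y) ⊆ famNbhd 𝒢 X ∩ famNbhd 𝒢 Y := by
    intro v hv
    simp only [famNbhd, mem_filter, mem_inter, mem_univ, true_and] at hv ⊢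
    obtain ⟨p, hp, h⟩ := hv
    exact ⟨⟨p, hp.1, h⟩, ⟨p, hp.2, h⟩⟩
  set σ : V × Fin t → ℤ := fun p =>
    (D : ℤ) - ∑ a ∈ (Finset.univ : Finset A).filter (fun a => φ a = p.1),
      (monDegOn ℋ.graph Finset.univ a p.2 : ℤ) with hσ
  have hR : ∀ Z : Finset (V × Fin t),
      Rfun 𝒢 Finset.univ ℋ Finset.univ φ D Z
        = ((famNbhd 𝒢 Z \ M).card : ℤ) - ∑ p ∈ Z, σ p - ((Pset ℋ Finset.univ φ ∩ Z).card : ℤ) := by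
    intro Z
    simp [Rfun, Finset.inter_univ, hσ, hM]
  -- submodularity of the neighbourhood term
  have hcard1 : ((famNbhd 𝒢 (X ∪ Y) \ M).card : ℤ) + ((famNbhd 𝒢 (X ∩ Y) \ M).card : ℤ)
      ≤ ((famNbhd 𝒢 X \ M).card : ℤ) + ((famNbhd 𝒢 Y \ M).card : ℤ) := by
    have h1 : famNbhd 𝒢 (X ∪ Y) \ M = (famNbhd 𝒢 X \ M) ∪ (famNbhd 𝒢 Y \ M) := by
      rw [hnb_union, Finset.union_sdiff_distrib]
    have h2 : famNbhd 𝒢 (X ∩ Y) \ M ⊆ (famNbhd 𝒢 X \ M) ∩ (famNbhd 𝒢 Y \ M) := by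
      intro v hv
      rw [Finset.mem_sdiff] at hv
      have := hnb_inter hv.1
      rw [Finset.mem_inter] at this ⊢
      exact ⟨Finset.mem_sdiff.2 ⟨this.1, hv.2⟩, Finset.mem_sdiff.2 ⟨this.2, hv.2⟩⟩
    have h3 := Finset.card_union_add_card_inter (famNbhd 𝒢 X \ M) (famNbhd 𝒢 Y \ M)
    have h4 := Finset.card_le_card h2
    rw [h1]
    push_cast
    omega
  have hsum : ∑ p ∈ X ∪ Y, σ p + ∑ p ∈ X ∩ Y, σ p = ∑ p ∈ X, σ p + ∑ p ∈ Y, σ p :=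
    Finset.sum_union_inter
  have hP : ((Pset ℋ Finset.univ φ ∩ (X ∪ Y)).card : ℤ)
      + ((Pset ℋ Finset.univ φ ∩ (X ∩ Y)).card : ℤ)
      = ((Pset ℋ Finset.univ φ ∩ X).card : ℤ) + ((Pset ℋ Finset.univ φ ∩ Y).card : ℤ) := by
    have h1 : Pset ℋ Finset.univ φ ∩ (X ∪ Y)
        = (Pset ℋ Finset.univ φ ∩ X) ∪ (Pset ℋ Finset.univ φ ∩ Y) :=
      Finset.inter_union_distrib_left _ _ _
    have h2 : Pset ℋ Finset.univ φ ∩ (X ∩ Y)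
        = (Pset ℋ Finset.univ φ ∩ X) ∩ (Pset ℋ Finset.univ φ ∩ Y) := by
      rw [Finset.inter_inter_distrib_left]
    have h3 := Finset.card_union_add_card_inter (Pset ℋ Finset.univ φ ∩ X)
      (Pset ℋ Finset.univ φ ∩ Y)
    rw [h1, h2]
    push_cast
    omega
  have hsubmod : Rfun 𝒢 Finset.univ ℋ Finset.univ φ D (X ∪ Y)
      + Rfun 𝒢 Finset.univ ℋ Finset.univ φ D (X ∩ Y)
      ≤ Rfun 𝒢 Finset.univ ℋ Finset.univ φ D X
      + Rfun 𝒢 Finset.univ ℋ Finset.univ φ D Y := by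
    rw [hR, hR, hR, hR]
    linarith
  have hcardU : (X ∪ Y).card ≤ 2 * s := by
    have := Finset.card_union_le X Y
    omega
  have hUpos : 0 ≤ Rfun 𝒢 Finset.univ ℋ Finset.univ φ D (X ∪ Y) := by
    apply hgood _ (fun p _ => Finset.mem_univ _)
    push_cast
    exact_mod_cast Nat.cast_le.2 hcardU
  have hIpos : 0 ≤ Rfun 𝒢 Finset.univ ℋ Finset.univ φ D (X ∩ Y) := by
    apply hgood _ (fun p _ => Finset.mem_univ _)
    have : (X ∩ Y).card ≤ 2 * s :=
      le_trans (le_trans (Finset.card_le_card Finset.inter_subset_left) hXs) (by omega)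
    exact_mod_cast Nat.cast_le.2 this
  have hU0 : Rfun 𝒢 Finset.univ ℋ Finset.univ φ D (X ∪ Y) = 0 := by
    rw [hX, hY] at hsubmod; linarith
  have hI0 : Rfun 𝒢 Finset.univ ℋ Finset.univ φ D (X ∩ Y) = 0 := by
    rw [hX, hY] at hsubmod; linarith
  refine ⟨hU0, hI0, ?_⟩
  by_contra hc
  push_neg at hc
  have hbig := hexp (X ∪ Y) hc hcardU
  -- bound the terms
  set Z := X ∪ Y with hZ
  have hσle : ∑ p ∈ Z, σ p ≤ (Z.card : ℤ) * D := by
    calc ∑ p ∈ Z, σ p ≤ ∑ p ∈ Z, (D : ℤ) := by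
          apply Finset.sum_le_sum
          intro p hp
          have : (0 : ℤ) ≤ ∑ a ∈ (Finset.univ : Finset A).filter (fun a => φ a = p.1),
              (monDegOn ℋ.graph Finset.univ a p.2 : ℤ) :=
            Finset.sum_nonneg fun a _ => Int.ofNat_nonneg _
          simp only [hσ]
          linarith
      _ = (Z.card : ℤ) * D := by rw [Finset.sum_const]; push_cast; ring
  have hPle : ((Pset ℋ Finset.univ φ ∩ Z).card : ℤ) ≤ (Z.card : ℤ) :=
    Int.ofNat_le.2 (Finset.card_le_card Finset.inter_subset_right)
  have hΓ : ((famNbhd 𝒢 Z).card : ℤ) ≤ ((famNbhd 𝒢 Z \ M).card : ℤ) + (M.card : ℤ) := by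
    have := Finset.card_le_card_sdiff_add_card (s := famNbhd 𝒢 Z) (t := M)
    exact_mod_cast this
  rw [hR] at hU0
  have : ((famNbhd 𝒢 Z).card : ℤ) ≤ ((D : ℤ) + 1) * Z.card + M.card := by
    have h5 : ((famNbhd 𝒢 Z \ M).card : ℤ) = ∑ p ∈ Z, σ p
        + ((Pset ℋ Finset.univ φ ∩ Z).card : ℤ) := by linarith
    calc ((famNbhd 𝒢 Z).card : ℤ) ≤ ((famNbhd 𝒢 Z \ M).card : ℤ) + M.card := hΓ
      _ ≤ (Z.card : ℤ) * D + Z.card + M.card := by rw [h5]; linarith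
      _ = ((D : ℤ) + 1) * Z.card + M.card := by ring
  rw [hM] at this
  linarith
end

section
/- (Vertex Extension in s-joined families) Let ℋ be a [t]-edge-colored rooted graph with Δ^mon(ℋ) ≤ D, and 𝒢 an s-joined graph family on n vertices. Let ℋ+wu extend ℋ by an r-colored edge at w with deg_{H_r}(w) < D. If |V(ℋ)| ≤ n − 2sD − 3s and there is a (2s,D)-good embedding φ: ℋ ↪ 𝒢, then there is a (2s,D)-good embedding of ℋ+wu extending φ. -/
open Finset
open scoped Classical

section Aux

open Finset

variable {V : Type*} [Fintype V] {t : ℕ}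

lemma mem_famNbhd (𝒢 : Fin t → SimpleGraph V) (X : Finset (V × Fin t)) (v : V) :
    v ∈ famNbhd 𝒢 X ↔ ∃ p ∈ X, (𝒢 p.2).Adj p.1 v := by
  simp [famNbhd]

lemma famNbhd_mono (𝒢 : Fin t → SimpleGraph V) {X Y : Finset (V × Fin t)}
    (h : X ⊆ Y) : famNbhd 𝒢 X ⊆ famNbhd 𝒢 Y := by
  intro v hv
  rw [mem_famNbhd] at hv ⊢
  obtain ⟨p, hp, hadj⟩ := hv
  exact ⟨p, h hp, hadj⟩

lemma famNbhd_empty (𝒢 : Fin t → SimpleGraph V) : famNbhd 𝒢 ∅ = ∅ := by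
  ext v; simp [mem_famNbhd]

lemma famNbhd_union (𝒢 : Fin t → SimpleGraph V) (X Y : Finset (V × Fin t)) :
    famNbhd 𝒢 (X ∪ Y) = famNbhd 𝒢 X ∪ famNbhd 𝒢 Y := by
  ext v
  simp only [mem_famNbhd, Finset.mem_union, exists_or]
  constructor
  · rintro ⟨p, hp | hp, hadj⟩
    · exact Or.inl ⟨p, hp, hadj⟩
    · exact Or.inr ⟨p, hp, hadj⟩
  · rintro (⟨p, hp, hadj⟩ | ⟨p, hp, hadj⟩)
    · exact ⟨p, Or.inl hp, hadj⟩
    · exact ⟨p, Or.inr hp, hadj⟩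

/-- The extended coloured rooted graph `ℋ + wu`. -/
def extCRG {A : Type*} {t : ℕ} (ℋ : ColoredRootedGraph A t) (w : A) (r : Fin t) :
    ColoredRootedGraph (Option A) t where
  graph i :=
    { Adj := fun x y =>
        match x, y with
        | some x, some y => (ℋ.graph i).Adj x y
        | some x, none => i = r ∧ x = w
        | none, some y => i = r ∧ y = w
        | none, none => False
      symm := by
        constructor
        rintro (x | x) (y | y) h
        · exact h
        · exact h
        · exact h
        · exact (ℋ.graph i).adj_symm h
      loopless := by
        constructor
        rintro (x | x) h
        · exact h
        · exact (ℋ.graph i).irrefl h }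
  isRoot o := o.elim false ℋ.isRoot
  parent o := o.elim (some w) fun x => some (ℋ.parent x)
  parentColor o := o.elim r ℋ.parentColor
  parent_adj := by
    rintro (_ | x) h
    · exact ⟨rfl, rfl⟩
    · exact ℋ.parent_adj x h

@[simp] lemma extCRG_adj_some_some {A : Type*} {t : ℕ} (ℋ : ColoredRootedGraph A t)
    (w : A) (r i : Fin t) (x y : A) :
    ((extCRG ℋ w r).graph i).Adj (some x) (some y) ↔ (ℋ.graph i).Adj x y := Iff.rfl

@[simp] lemma extCRG_adj_some_none {A : Type*} {t : ℕ} (ℋ : ColoredRootedGraph A t)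
    (w : A) (r i : Fin t) (x : A) :
    ((extCRG ℋ w r).graph i).Adj (some x) none ↔ (i = r ∧ x = w) := Iff.rfl

@[simp] lemma extCRG_adj_none_some {A : Type*} {t : ℕ} (ℋ : ColoredRootedGraph A t)
    (w : A) (r i : Fin t) (y : A) :
    ((extCRG ℋ w r).graph i).Adj none (some y) ↔ (i = r ∧ y = w) := Iff.rfl

@[simp] lemma extCRG_adj_none_none {A : Type*} {t : ℕ} (ℋ : ColoredRootedGraph A t)
    (w : A) (r i : Fin t) :
    ¬ ((extCRG ℋ w r).graph i).Adj none none := fun h => h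

end Aux
section Aux2

open Finset

variable {V A : Type*} [Fintype V] [Fintype A] {t : ℕ}

lemma monDegOn_ext_some (ℋ : ColoredRootedGraph A t) (w : A) (r : Fin t)
    (x : A) (i : Fin t) :
    monDegOn (extCRG ℋ w r).graph Finset.univ (some x) i
      = monDegOn ℋ.graph Finset.univ x i + (if i = r ∧ x = w then 1 else 0) := by
  classical
  rw [monDegOn, monDegOn, card_filter, card_filter, univ_option,
    Finset.sum_insertNone]
  simp only [extCRG_adj_some_none, extCRG_adj_some_some]
  ring

lemma monDegOn_ext_none (ℋ : ColoredRootedGraph A t) (w : A) (r : Fin t) (i : Fin t) :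
    monDegOn (extCRG ℋ w r).graph Finset.univ none i = if i = r then 1 else 0 := by
  classical
  rw [monDegOn, card_filter, univ_option, Finset.sum_insertNone]
  simp only [extCRG_adj_none_none, extCRG_adj_none_some, if_false]
  by_cases h : i = r
  · subst h
    simp [Finset.sum_ite_eq']
  · simp [h]

lemma Pset_ext (ℋ : ColoredRootedGraph A t) (w : A) (r : Fin t) (φ : A → V) (a : V) :
    Pset (extCRG ℋ w r) Finset.univ (fun o => o.elim a φ)
      = insert (a, r) (Pset ℋ Finset.univ φ) := by
  classical
  ext p
  simp only [Pset, mem_image, mem_filter, mem_univ, true_and, mem_insert]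
  constructor
  · rintro ⟨(_ | x), hroot, rfl⟩
    · exact Or.inl rfl
    · exact Or.inr ⟨x, hroot, rfl⟩
  · rintro (rfl | ⟨x, hroot, rfl⟩)
    · exact ⟨none, rfl, rfl⟩
    · exact ⟨some x, hroot, rfl⟩

lemma image_ext (φ : A → V) (a : V) :
    (Finset.univ : Finset (Option A)).image (fun o => o.elim a φ)
      = insert a (Finset.univ.image φ) := by
  classical
  ext v
  simp only [mem_image, mem_univ, true_and, mem_insert]
  constructor
  · rintro ⟨(_ | x), rfl⟩
    · exact Or.inl rfl
    · exact Or.inr ⟨x, rfl⟩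
  · rintro (rfl | ⟨x, rfl⟩)
    · exact ⟨none, rfl⟩
    · exact ⟨some x, rfl⟩

lemma sum_option' {M : Type*} [AddCommMonoid M] (f : Option A → M) :
    ∑ o : Option A, f o = f none + ∑ x : A, f (some x) := by
  rw [univ_option, Finset.sum_insertNone]

lemma inner_ext (ℋ : ColoredRootedGraph A t) (w : A) (r : Fin t) (φ : A → V) (a : V)
    (v : V) (i : Fin t) :
    (∑ o ∈ Finset.univ.filter (fun o => (fun o : Option A => o.elim a φ) o = v),
        (monDegOn (extCRG ℋ w r).graph Finset.univ o i : ℤ))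
      = (∑ x ∈ Finset.univ.filter (fun x => φ x = v), (monDegOn ℋ.graph Finset.univ x i : ℤ))
        + (if φ w = v ∧ i = r then 1 else 0) + (if a = v ∧ i = r then 1 else 0) := by
  classical
  rw [Finset.sum_filter, Finset.sum_filter, sum_option']
  simp only [Option.elim]
  have h1 : (if a = v then (monDegOn (extCRG ℋ w r).graph Finset.univ none i : ℤ) else 0)
      = if a = v ∧ i = r then 1 else 0 := by
    rw [monDegOn_ext_none]
    by_cases h : a = v <;> by_cases h' : i = r <;> simp [h, h']
  have h2 : ∀ x : A, (if φ x = v then (monDegOn (extCRG ℋ w r).graph Finset.univ (some x) i : ℤ) else 0)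
      = (if φ x = v then (monDegOn ℋ.graph Finset.univ x i : ℤ) else 0)
        + (if φ x = v ∧ i = r ∧ x = w then 1 else 0) := by
    intro x
    rw [monDegOn_ext_some]
    push_cast
    by_cases h : φ x = v <;> simp [h]
  erw [h1, Finset.sum_congr rfl (fun x _ => h2 x), Finset.sum_add_distrib]
  have h3 : (∑ x : A, (if φ x = v ∧ i = r ∧ x = w then (1:ℤ) else 0))
      = if φ w = v ∧ i = r then 1 else 0 := by
    rw [Finset.sum_eq_single w]
    · by_cases h : φ w = v ∧ i = r
      · rw [if_pos ⟨h.1, h.2, rfl⟩, if_pos h]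
      · rw [if_neg, if_neg h]
        rintro ⟨ha, hb, -⟩; exact h ⟨ha, hb⟩
    · intro b _ hb
      rw [if_neg]; rintro ⟨-, -, rfl⟩; exact hb rfl
    · intro h; exact absurd (Finset.mem_univ w) h
  rw [h3]
  ring

end Aux2
section Aux3

open Finset

variable {V A : Type*} [Fintype V] [Fintype A] {t : ℕ}

lemma Rfun_univ_def (𝒢 : Fin t → SimpleGraph V) (ℋ : ColoredRootedGraph A t)
    (φ : A → V) (D : ℕ) (X : Finset (V × Fin t)) :
    Rfun 𝒢 Finset.univ ℋ Finset.univ φ D X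
      = ((famNbhd 𝒢 X \ Finset.univ.image φ).card : ℤ)
        - ∑ p ∈ X, ((D : ℤ) - ∑ a ∈ Finset.univ.filter (fun a => φ a = p.1),
            (monDegOn ℋ.graph Finset.univ a p.2 : ℤ))
        - ((Pset ℋ Finset.univ φ ∩ X).card : ℤ) := by
  rw [Rfun, Finset.inter_univ]

lemma Rfun_subadd (𝒢 : Fin t → SimpleGraph V) (ℋ : ColoredRootedGraph A t)
    (φ : A → V) (D : ℕ) (X Y : Finset (V × Fin t)) :
    Rfun 𝒢 Finset.univ ℋ Finset.univ φ D (X ∪ Y)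
      + Rfun 𝒢 Finset.univ ℋ Finset.univ φ D (X ∩ Y)
      ≤ Rfun 𝒢 Finset.univ ℋ Finset.univ φ D X
        + Rfun 𝒢 Finset.univ ℋ Finset.univ φ D Y := by
  classical
  rw [Rfun_univ_def, Rfun_univ_def, Rfun_univ_def, Rfun_univ_def]
  set I := Finset.univ.image φ with hI
  set f : V × Fin t → ℤ := fun p => ((D : ℤ) - ∑ a ∈ Finset.univ.filter (fun a => φ a = p.1),
    (monDegOn ℋ.graph Finset.univ a p.2 : ℤ)) with hf
  set P := Pset ℋ Finset.univ φ with hP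
  have e1 : ((famNbhd 𝒢 (X ∪ Y) \ I).card : ℤ) + ((famNbhd 𝒢 X ∩ famNbhd 𝒢 Y) \ I).card
      = ((famNbhd 𝒢 X \ I).card : ℤ) + (famNbhd 𝒢 Y \ I).card := by
    rw [famNbhd_union, Finset.union_sdiff_distrib]
    have : (famNbhd 𝒢 X ∩ famNbhd 𝒢 Y) \ I = (famNbhd 𝒢 X \ I) ∩ (famNbhd 𝒢 Y \ I) := by
      ext v; simp [Finset.mem_sdiff, Finset.mem_inter]; tauto
    rw [this]
    exact_mod_cast Finset.card_union_add_card_inter _ _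
  have e2 : ((famNbhd 𝒢 (X ∩ Y) \ I).card : ℤ) ≤ ((famNbhd 𝒢 X ∩ famNbhd 𝒢 Y) \ I).card := by
    have hsub : famNbhd 𝒢 (X ∩ Y) ⊆ famNbhd 𝒢 X ∩ famNbhd 𝒢 Y :=
      Finset.subset_inter (famNbhd_mono 𝒢 Finset.inter_subset_left)
        (famNbhd_mono 𝒢 Finset.inter_subset_right)
    exact_mod_cast Finset.card_le_card (Finset.sdiff_subset_sdiff hsub le_rfl)
  have e3 : ∑ p ∈ X ∪ Y, f p + ∑ p ∈ X ∩ Y, f p = ∑ p ∈ X, f p + ∑ p ∈ Y, f p :=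
    Finset.sum_union_inter
  have e4 : ((P ∩ (X ∪ Y)).card : ℤ) + ((P ∩ (X ∩ Y)).card : ℤ)
      = ((P ∩ X).card : ℤ) + ((P ∩ Y).card : ℤ) := by
    rw [Finset.inter_union_distrib_left]
    have : P ∩ (X ∩ Y) = (P ∩ X) ∩ (P ∩ Y) := by
      ext p; simp [Finset.mem_inter]; tauto
    rw [this]
    exact_mod_cast Finset.card_union_add_card_inter _ _
  linarith

lemma Rfun_ext_ge (𝒢 : Fin t → SimpleGraph V) (ℋ : ColoredRootedGraph A t)
    (w : A) (r : Fin t) (φ : A → V) (a : V) (ha : a ∉ Finset.univ.image φ)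
    (D : ℕ) (X : Finset (V × Fin t)) :
    Rfun 𝒢 Finset.univ ℋ Finset.univ φ D X
      - (if a ∈ famNbhd 𝒢 X then 1 else 0) + (if (φ w, r) ∈ X then 1 else 0)
    ≤ Rfun 𝒢 Finset.univ (extCRG ℋ w r) Finset.univ (fun o => o.elim a φ) D X := by
  classical
  rw [Rfun_univ_def, Rfun_univ_def]
  set I := Finset.univ.image φ with hI
  set N := famNbhd 𝒢 X with hN
  -- term 1
  have t1 : ((N \ Finset.univ.image (fun o : Option A => o.elim a φ)).card : ℤ)
      = ((N \ I).card : ℤ) - (if a ∈ N then 1 else 0) := by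
    rw [image_ext, Finset.sdiff_insert]
    by_cases haN : a ∈ N
    · have hmem : a ∈ N \ I := Finset.mem_sdiff.mpr ⟨haN, ha⟩
      rw [Finset.card_erase_of_mem hmem, if_pos haN]
      have : 1 ≤ (N \ I).card := Finset.card_pos.mpr ⟨a, hmem⟩
      push_cast [Nat.cast_sub this]
      ring
    · rw [Finset.erase_eq_of_notMem (fun hmem => haN (Finset.mem_sdiff.mp hmem).1),
        if_neg haN, sub_zero]
  -- term 2
  have t2 : ∑ p ∈ X, ((D : ℤ) - ∑ o ∈ Finset.univ.filter
        (fun o : Option A => (fun o : Option A => o.elim a φ) o = p.1),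
        (monDegOn (extCRG ℋ w r).graph Finset.univ o p.2 : ℤ))
      = ∑ p ∈ X, ((D : ℤ) - ∑ x ∈ Finset.univ.filter (fun x => φ x = p.1),
          (monDegOn ℋ.graph Finset.univ x p.2 : ℤ))
        - (if (φ w, r) ∈ X then 1 else 0) - (if (a, r) ∈ X then 1 else 0) := by
    have key : ∀ p ∈ X, ((D : ℤ) - ∑ o ∈ Finset.univ.filter
          (fun o : Option A => (fun o : Option A => o.elim a φ) o = p.1),
          (monDegOn (extCRG ℋ w r).graph Finset.univ o p.2 : ℤ))
        = ((D : ℤ) - ∑ x ∈ Finset.univ.filter (fun x => φ x = p.1),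
            (monDegOn ℋ.graph Finset.univ x p.2 : ℤ))
          - (if p = (φ w, r) then 1 else 0) - (if p = (a, r) then 1 else 0) := by
      intro p _
      rw [inner_ext ℋ w r φ a p.1 p.2]
      have c1 : (if φ w = p.1 ∧ p.2 = r then (1:ℤ) else 0) = if p = (φ w, r) then 1 else 0 := by
        by_cases h : p = (φ w, r)
        · subst h; simp
        · rw [if_neg h, if_neg]
          rintro ⟨h1, h2⟩; exact h (Prod.ext_iff.mpr ⟨h1.symm, h2⟩)
      have c2 : (if a = p.1 ∧ p.2 = r then (1:ℤ) else 0) = if p = (a, r) then 1 else 0 := by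
        by_cases h : p = (a, r)
        · subst h; simp
        · rw [if_neg h, if_neg]
          rintro ⟨h1, h2⟩; exact h (Prod.ext_iff.mpr ⟨h1.symm, h2⟩)
      rw [c1, c2]; ring
    rw [Finset.sum_congr rfl key]
    rw [Finset.sum_sub_distrib, Finset.sum_sub_distrib]
    congr 1
    · congr 1
      rw [Finset.sum_ite_eq' X (φ w, r) (fun _ => (1:ℤ))]
    · rw [Finset.sum_ite_eq' X (a, r) (fun _ => (1:ℤ))]
  -- term 3
  have t3 : ((Pset (extCRG ℋ w r) Finset.univ (fun o => o.elim a φ) ∩ X).card : ℤ)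
      ≤ ((Pset ℋ Finset.univ φ ∩ X).card : ℤ) + (if (a, r) ∈ X then 1 else 0) := by
    rw [Pset_ext]
    by_cases haX : (a, r) ∈ X
    · rw [Finset.insert_inter_of_mem haX, if_pos haX]
      calc ((insert (a, r) (Pset ℋ Finset.univ φ ∩ X)).card : ℤ)
          ≤ ((Pset ℋ Finset.univ φ ∩ X).card + 1 : ℕ) := by
            exact_mod_cast Finset.card_insert_le _ _
        _ = _ := by push_cast; ring
    · rw [Finset.insert_inter_of_notMem haX, if_neg haX, add_zero]
  rw [t2]
  have := t1
  linarith

end Aux3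

/-- Vertex Extension in `s`-joined families: if `𝒢` is an `s`-joined
family on `n` vertices and `|V(ℋ)| ≤ n − 2sD − 3s`, any `(2s,D)`-good embedding of
`ℋ` extends to a `(2s,D)`-good embedding of `ℋ + wu`. -/
theorem joined_vertex_extension {V A : Type*} [Fintype V] [Fintype A] {t : ℕ}
    (𝒢 : Fin t → SimpleGraph V) (s D : ℕ) (hs : 1 ≤ s) (ht : 1 ≤ t) (hD : 1 ≤ D)
    (hjoin : FamJoined 𝒢 s)
    (ℋ : ColoredRootedGraph A t)
    (hΔ : ∀ i x, monDegOn ℋ.graph Finset.univ x i ≤ D)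
    (w : A) (r : Fin t) (hw : monDegOn ℋ.graph Finset.univ w r < D)
    (hcard : Fintype.card A + 2 * s * D + 3 * s ≤ Fintype.card V)
    (φ : A → V) (hemb : IsColEmbedding 𝒢 ℋ.graph φ)
    (hgood : IsGood 𝒢 Finset.univ ℋ Finset.univ φ (2 * s : ℝ) D) :
    ∃ (a : V) (ℋ' : ColoredRootedGraph (Option A) t),
      a ∉ Finset.univ.image φ ∧ (𝒢 r).Adj (φ w) a ∧
      (∀ i x y, (ℋ'.graph i).Adj (some x) (some y) ↔ (ℋ.graph i).Adj x y) ∧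
      (∀ i x, (ℋ'.graph i).Adj (some x) none ↔ (i = r ∧ x = w)) ∧
      (∀ x, ℋ'.isRoot (some x) = ℋ.isRoot x) ∧ ℋ'.isRoot none = false ∧
      (∀ x, ℋ'.parentColor (some x) = ℋ.parentColor x) ∧ ℋ'.parentColor none = r ∧
      ℋ'.parent none = some w ∧
      IsColEmbedding 𝒢 ℋ'.graph (fun o => o.elim a φ) ∧
      IsGood 𝒢 Finset.univ ℋ' Finset.univ (fun o => o.elim a φ) (2 * s : ℝ) D := by
  classical
  obtain ⟨hinj, hpres⟩ := hemb
  set R : Finset (V × Fin t) → ℤ := Rfun 𝒢 Finset.univ ℋ Finset.univ φ D with hRdef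
  have hgood' : ∀ X : Finset (V × Fin t), X.card ≤ 2 * s → 0 ≤ R X := by
    intro X hX
    refine hgood X (fun p _ => Finset.mem_univ _) ?_
    calc (X.card : ℝ) ≤ ((2 * s : ℕ) : ℝ) := Nat.cast_le.mpr hX
      _ = 2 * s := by push_cast; ring
  have hIcard : (Finset.univ.image φ).card ≤ Fintype.card A :=
    le_trans Finset.card_image_le (le_of_eq Finset.card_univ)
  -- neighbourhood bound for tight sets
  have hNbd : ∀ X : Finset (V × Fin t), R X = 0 → X.card ≤ 2 * s →
      (famNbhd 𝒢 X \ Finset.univ.image φ).card ≤ 2 * s * D + 2 * s := by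
    intro X h0 hc
    have hdef := Rfun_univ_def 𝒢 ℋ φ D X
    rw [← hRdef, h0] at hdef
    have hsum : ∑ p ∈ X, ((D : ℤ) - ∑ x ∈ Finset.univ.filter (fun x => φ x = p.1),
        (monDegOn ℋ.graph Finset.univ x p.2 : ℤ)) ≤ (X.card : ℤ) * D := by
      calc ∑ p ∈ X, ((D : ℤ) - ∑ x ∈ Finset.univ.filter (fun x => φ x = p.1),
            (monDegOn ℋ.graph Finset.univ x p.2 : ℤ))
          ≤ ∑ _p ∈ X, (D : ℤ) := by
            refine Finset.sum_le_sum (fun p _ => ?_)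
            have : (0:ℤ) ≤ ∑ x ∈ Finset.univ.filter (fun x => φ x = p.1),
                (monDegOn ℋ.graph Finset.univ x p.2 : ℤ) :=
              Finset.sum_nonneg (fun x _ => Int.natCast_nonneg _)
            linarith
        _ = (X.card : ℤ) * D := by rw [Finset.sum_const, nsmul_eq_mul]
    have hP : ((Pset ℋ Finset.univ φ ∩ X).card : ℤ) ≤ (X.card : ℤ) := by
      exact_mod_cast Finset.card_le_card Finset.inter_subset_right
    have hc' : (X.card : ℤ) ≤ 2 * (s : ℤ) := by exact_mod_cast hc
    have hD0 : (0:ℤ) ≤ (D : ℤ) := Int.natCast_nonneg _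
    have m1 : (X.card : ℤ) * D ≤ 2 * (s:ℤ) * D := mul_le_mul_of_nonneg_right hc' hD0
    have final : ((famNbhd 𝒢 X \ Finset.univ.image φ).card : ℤ) ≤ 2 * (s:ℤ) * D + 2 * s := by
      linarith
    exact_mod_cast final
  -- tight sets are small
  have hTight_small : ∀ X : Finset (V × Fin t), X.card ≤ 2 * s → R X = 0 → X.card < s := by
    intro X hc h0
    by_contra hns
    push_neg at hns
    set Y : Finset V := Finset.univ \ (famNbhd 𝒢 X ∪ Finset.univ.image φ) with hY
    have hYc : s ≤ Y.card := by
      have h1 : (famNbhd 𝒢 X \ Finset.univ.image φ).card + (Finset.univ.image φ).card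
          = (famNbhd 𝒢 X ∪ Finset.univ.image φ).card :=
        Finset.card_sdiff_add_card _ _
      have h2 := hNbd X h0 hc
      have h3 : Y.card = Fintype.card V - (famNbhd 𝒢 X ∪ Finset.univ.image φ).card := by
        rw [hY, Finset.card_sdiff_of_subset (Finset.subset_univ _), Finset.card_univ]
      omega
    have hpos := hjoin X Y hns hYc
    unfold famPairs at hpos
    obtain ⟨q, hq⟩ := Finset.card_pos.mp hpos
    rw [Finset.mem_filter, Finset.mem_product] at hq
    obtain ⟨⟨hqX, hqY⟩, hadjq⟩ := hq
    have hmem : q.2 ∈ famNbhd 𝒢 X := (mem_famNbhd 𝒢 X q.2).mpr ⟨q.1, hqX, hadjq⟩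
    exact (Finset.mem_sdiff.mp hqY).2 (Finset.mem_union_left _ hmem)
  -- tight sets
  set Tgt : Finset (V × Fin t) → Prop :=
    fun X => X.card ≤ 2 * s ∧ (φ w, r) ∉ X ∧ R X = 0 with hTgt
  have hTempty : Tgt ∅ := by
    refine ⟨by simp, by simp, ?_⟩
    rw [hRdef, Rfun_univ_def]
    simp [famNbhd_empty]
  have hTunion : ∀ X Y, Tgt X → Tgt Y → Tgt (X ∪ Y) := by
    rintro X Y ⟨hcX, hwX, h0X⟩ ⟨hcY, hwY, h0Y⟩
    have hX : X.card < s := hTight_small X hcX h0X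
    have hY : Y.card < s := hTight_small Y hcY h0Y
    have hcU : (X ∪ Y).card ≤ 2 * s :=
      le_trans (Finset.card_union_le _ _) (by omega)
    refine ⟨hcU, by simp [hwX, hwY], ?_⟩
    have h1 := Rfun_subadd 𝒢 ℋ φ D X Y
    rw [← hRdef] at h1
    have h2 : 0 ≤ R (X ∪ Y) := hgood' _ hcU
    have h3 : 0 ≤ R (X ∩ Y) :=
      hgood' _ (le_trans (Finset.card_le_card Finset.inter_subset_left) hcX)
    omega
  -- the maximal tight set
  set Xs : Finset (V × Fin t) :=
    Finset.univ.sup (fun X : Finset (V × Fin t) => if Tgt X then X else ∅) with hXsdef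
  have hXsT : Tgt Xs := by
    refine Finset.sup_induction hTempty (fun a1 h1 a2 h2 => hTunion a1 a2 h1 h2) ?_
    intro X _
    by_cases h : Tgt X
    · rw [if_pos h]; exact h
    · rw [if_neg h]; exact hTempty
  have hXsub : ∀ X, Tgt X → X ⊆ Xs := by
    intro X hX
    have h := Finset.le_sup (f := fun X : Finset (V × Fin t) => if Tgt X then X else ∅)
      (Finset.mem_univ X)
    have h' : (if Tgt X then X else ∅) ⊆ Xs := h
    rw [if_pos hX] at h'
    exact h'
  -- find the vertex a
  have hwXs : (φ w, r) ∉ Xs := hXsT.2.1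
  set X' : Finset (V × Fin t) := insert (φ w, r) Xs with hX'def
  have hXs_small : Xs.card < s := hTight_small Xs hXsT.1 hXsT.2.2
  have hcX' : X'.card ≤ 2 * s := by
    rw [hX'def, Finset.card_insert_of_notMem hwXs]
    omega
  have h0X' := hgood' X' hcX'
  have hdefXs := Rfun_univ_def 𝒢 ℋ φ D Xs
  rw [← hRdef, hXsT.2.2] at hdefXs
  have hdefX' := Rfun_univ_def 𝒢 ℋ φ D X'
  rw [← hRdef] at hdefX'
  have hsumX' : ∑ p ∈ X', ((D : ℤ) - ∑ x ∈ Finset.univ.filter (fun x => φ x = p.1),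
      (monDegOn ℋ.graph Finset.univ x p.2 : ℤ))
      = ((D : ℤ) - ∑ x ∈ Finset.univ.filter (fun x => φ x = (φ w, r).1),
          (monDegOn ℋ.graph Finset.univ x (φ w, r).2 : ℤ))
        + ∑ p ∈ Xs, ((D : ℤ) - ∑ x ∈ Finset.univ.filter (fun x => φ x = p.1),
          (monDegOn ℋ.graph Finset.univ x p.2 : ℤ)) :=
    Finset.sum_insert hwXs
  have hfilter : Finset.univ.filter (fun x => φ x = (φ w, r).1) = {w} := by
    ext x
    simp [hinj.eq_iff]
  have hfw : ∑ x ∈ Finset.univ.filter (fun x => φ x = (φ w, r).1),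
      (monDegOn ℋ.graph Finset.univ x (φ w, r).2 : ℤ)
      = (monDegOn ℋ.graph Finset.univ w r : ℤ) := by
    rw [hfilter, Finset.sum_singleton]
  have hdeg : (monDegOn ℋ.graph Finset.univ w r : ℤ) < D := by exact_mod_cast hw
  have hPsub : ((Pset ℋ Finset.univ φ ∩ Xs).card : ℤ)
      ≤ ((Pset ℋ Finset.univ φ ∩ X').card : ℤ) := by
    exact_mod_cast Finset.card_le_card
      (Finset.inter_subset_inter Finset.Subset.rfl (Finset.subset_insert _ _))
  have hlt : ((famNbhd 𝒢 Xs \ Finset.univ.image φ).card : ℤ)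
      < ((famNbhd 𝒢 X' \ Finset.univ.image φ).card : ℤ) := by
    rw [hsumX', hfw] at hdefX'
    linarith
  have hnsub : ¬ (famNbhd 𝒢 X' \ Finset.univ.image φ ⊆ famNbhd 𝒢 Xs) := by
    intro hsub
    have hss : famNbhd 𝒢 X' \ Finset.univ.image φ ⊆ famNbhd 𝒢 Xs \ Finset.univ.image φ :=
      fun x hx => Finset.mem_sdiff.mpr ⟨hsub hx, (Finset.mem_sdiff.mp hx).2⟩
    have := Finset.card_le_card hss
    have : ((famNbhd 𝒢 X' \ Finset.univ.image φ).card : ℤ)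
        ≤ ((famNbhd 𝒢 Xs \ Finset.univ.image φ).card : ℤ) := by exact_mod_cast this
    linarith
  obtain ⟨a, haX', ha3⟩ := Finset.not_subset.mp hnsub
  obtain ⟨haN, ha2⟩ := Finset.mem_sdiff.mp haX'
  obtain ⟨p, hp, hadjp⟩ := (mem_famNbhd 𝒢 X' a).mp haN
  have hp' : p = (φ w, r) := by
    rcases Finset.mem_insert.mp hp with h | h
    · exact h
    · exact absurd ((mem_famNbhd 𝒢 Xs a).mpr ⟨p, h, hadjp⟩) ha3
  rw [hp'] at hadjp
  have hadj : (𝒢 r).Adj (φ w) a := hadjp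
  -- conclusion
  refine ⟨a, extCRG ℋ w r, ha2, hadj,
    fun i x y => Iff.rfl, fun i x => Iff.rfl, fun x => rfl, rfl, fun x => rfl, rfl, rfl,
    ⟨?_, ?_⟩, ?_⟩
  · -- injectivity
    intro o1 o2 h
    cases o1 with
    | none =>
      cases o2 with
      | none => rfl
      | some y => exact absurd (Finset.mem_image.mpr ⟨y, Finset.mem_univ y, h.symm⟩) ha2
    | some x =>
      cases o2 with
      | none => exact absurd (Finset.mem_image.mpr ⟨x, Finset.mem_univ x, h⟩) ha2
      | some y => exact congrArg some (hinj h)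
  · -- adjacency preservation
    intro i o1 o2 hadj'
    cases o1 with
    | none =>
      cases o2 with
      | none => exact absurd hadj' (extCRG_adj_none_none ℋ w r i)
      | some y =>
        obtain ⟨h1, h2⟩ := hadj'
        subst h1; subst h2
        exact hadj.symm
    | some x =>
      cases o2 with
      | none =>
        obtain ⟨h1, h2⟩ := hadj'
        subst h1; subst h2
        exact hadj
      | some y => exact hpres i x y hadj'
  · -- goodness
    intro X _ hXc
    have hXc' : X.card ≤ 2 * s := by exact_mod_cast hXc
    have key := Rfun_ext_ge 𝒢 ℋ w r φ a ha2 D X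
    rw [← hRdef] at key
    have hRX : 0 ≤ R X := hgood' X hXc'
    by_cases h1 : a ∈ famNbhd 𝒢 X
    · by_cases h2 : (φ w, r) ∈ X
      · rw [if_pos h1, if_pos h2] at key; linarith
      · have hR1 : 1 ≤ R X := by
          rcases lt_or_eq_of_le hRX with h | h
          · omega
          · exfalso
            have hT : Tgt X := ⟨hXc', h2, h.symm⟩
            exact ha3 (famNbhd_mono 𝒢 (hXsub X hT) h1)
        rw [if_pos h1, if_neg h2] at key; linarith
    · rw [if_neg h1] at key
      by_cases h2 : (φ w, r) ∈ X
      · rw [if_pos h2] at key; linarith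
      · rw [if_neg h2] at key; linarith
end

section
/- (Small-set expansion after deleting a bad set) Let B be an s-bijoined bipartite graph with parts U = V×[t] and V, and let Y_0 ⊆ V with |Y_0| ≥ 3sD + 4s. Then there exists U_0 ⊆ U with |U_0| ≤ s such that for every X ⊆ U \ U_0 with |X| ≤ 2s, the set N*(X, Y_0 \ U_0|_V) has size at least D|X|. -/
open Finset
open scoped Classical

/-- Small-set expansion after deleting a bad set: in an `s`-bijoined
bipartite graph with parts `V × [t]` and `V`, for any `Y₀` with `|Y₀| ≥ 3sD + 4s`
there is `U₀` of size `≤ s` such that every `X ⊆ U \ U₀` with `|X| ≤ 2s` has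
`|N*(X, Y₀ \ U₀|_V)| ≥ D|X|`. -/
theorem small_set_expansion {V : Type*} [Fintype V] {t : ℕ}
    (s D : ℕ) (hs : 1 ≤ s) (hD : 1 ≤ D) (ht : 1 ≤ t)
    (B : V × Fin t → V → Prop)
    (hjoin : ∀ (X : Finset (V × Fin t)) (Y : Finset V), s ≤ X.card → s ≤ Y.card →
      ∃ p ∈ X, ∃ v ∈ Y, B p v)
    (Y0 : Finset V) (hY0 : 3 * s * D + 4 * s ≤ Y0.card) :
    ∃ U0 : Finset (V × Fin t), U0.card ≤ s ∧
      ∀ X : Finset (V × Fin t), Disjoint X U0 → X.card ≤ 2 * s →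
        D * X.card ≤
          (((Y0 \ U0.image Prod.fst).filter fun v => ∃ p ∈ X, B p v)
            \ X.image Prod.fst).card := by
  classical
  set P : Finset (V × Fin t) → Prop := fun W =>
    W.card ≤ 3 * s ∧
      (((Y0.filter fun v => ∃ p ∈ W, B p v) \ W.image Prod.fst).card < D * W.card ∨ W = ∅)
    with hP
  have hne : ((univ : Finset (Finset (V × Fin t))).filter P).Nonempty :=
    ⟨∅, by simp [hP]⟩
  obtain ⟨U0, hU0mem, hmax⟩ := Finset.exists_max_image _ Finset.card hne
  have hPU0 : P U0 := (Finset.mem_filter.mp hU0mem).2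
  have hcard3 : U0.card ≤ 3 * s := hPU0.1
  have hA1 : ((Y0.filter fun v => ∃ p ∈ U0, B p v) \ U0.image Prod.fst).card
      ≤ D * U0.card := by
    rcases hPU0.2 with h | h
    · exact h.le
    · subst h; simp
  -- part (a): U0.card ≤ s
  have hU0s : U0.card ≤ s := by
    by_contra h
    push_neg at h
    have hU0ne : U0 ≠ ∅ := by
      intro h0; rw [h0] at h; simp at h
    have hstrict : ((Y0.filter fun v => ∃ p ∈ U0, B p v) \ U0.image Prod.fst).card
        < D * U0.card := by
      rcases hPU0.2 with h' | h'
      · exact h'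
      · exact absurd h' hU0ne
    have himg : (U0.image Prod.fst).card ≤ U0.card := Finset.card_image_le
    have hfilt : (Y0.filter fun v => ∃ p ∈ U0, B p v).card
        ≤ ((Y0.filter fun v => ∃ p ∈ U0, B p v) \ U0.image Prod.fst).card
          + (U0.image Prod.fst).card := Finset.card_le_card_sdiff_add_card
    have hmul : D * U0.card ≤ 3 * s * D := by
      calc D * U0.card ≤ D * (3 * s) := Nat.mul_le_mul_left D hcard3
        _ = 3 * s * D := by ring
    have hsplit : (Y0.filter fun v => ∃ p ∈ U0, B p v).card
        + (Y0.filter fun v => ¬∃ p ∈ U0, B p v).card = Y0.card :=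
      Finset.card_filter_add_card_filter_not _
    have hYg : s ≤ (Y0.filter fun v => ¬∃ p ∈ U0, B p v).card := by
      set m := 3 * s * D with hm
      set n := D * U0.card with hn
      omega
    obtain ⟨p, hp, v, hv, hB⟩ := hjoin U0 _ h.le hYg
    exact (Finset.mem_filter.mp hv).2 ⟨p, hp, hB⟩
  refine ⟨U0, hU0s, ?_⟩
  intro X hdisj hX
  by_contra hlt
  push_neg at hlt
  have hXne : 1 ≤ X.card := by
    rcases Nat.eq_zero_or_pos X.card with h0 | h0
    · rw [h0, Nat.mul_zero] at hlt; omega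
    · exact h0
  set W := U0 ∪ X with hW
  have hWcard : W.card = U0.card + X.card := Finset.card_union_of_disjoint hdisj.symm
  have hPW : P W := by
    constructor
    · omega
    · left
      have hsub : ((Y0.filter fun v => ∃ p ∈ W, B p v) \ W.image Prod.fst)
          ⊆ ((Y0.filter fun v => ∃ p ∈ U0, B p v) \ U0.image Prod.fst)
            ∪ (((Y0 \ U0.image Prod.fst).filter fun v => ∃ p ∈ X, B p v)
              \ X.image Prod.fst) := by
        intro v hv
        obtain ⟨hvf, hvnot⟩ := Finset.mem_sdiff.mp hv
        obtain ⟨hvY, p, hpW, hB⟩ := Finset.mem_filter.mp hvf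
        have hvU : v ∉ U0.image Prod.fst := fun hh =>
          hvnot (Finset.image_subset_image Finset.subset_union_left hh)
        have hvX : v ∉ X.image Prod.fst := fun hh =>
          hvnot (Finset.image_subset_image Finset.subset_union_right hh)
        rcases Finset.mem_union.mp hpW with hpU | hpX
        · exact Finset.mem_union_left _ (Finset.mem_sdiff.mpr
            ⟨Finset.mem_filter.mpr ⟨hvY, p, hpU, hB⟩, hvU⟩)
        · exact Finset.mem_union_right _ (Finset.mem_sdiff.mpr
            ⟨Finset.mem_filter.mpr ⟨Finset.mem_sdiff.mpr ⟨hvY, hvU⟩, p, hpX, hB⟩, hvX⟩)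
      calc ((Y0.filter fun v => ∃ p ∈ W, B p v) \ W.image Prod.fst).card
          ≤ _ := Finset.card_le_card hsub
        _ ≤ ((Y0.filter fun v => ∃ p ∈ U0, B p v) \ U0.image Prod.fst).card
            + (((Y0 \ U0.image Prod.fst).filter fun v => ∃ p ∈ X, B p v)
              \ X.image Prod.fst).card := Finset.card_union_le _ _
        _ < D * U0.card + D * X.card := add_lt_add_of_le_of_lt hA1 hlt
        _ = D * W.card := by rw [hWcard, Nat.mul_add]
  have := hmax W (Finset.mem_filter.mpr ⟨Finset.mem_univ _, hPW⟩)
  omega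
end

section
/- (High minimum monochromatic degree vertex) For any 0 < c < 1, if 𝒢 = {G_1,...,G_t} is a family of (p,β)-jumbled graphs on the common vertex set V with |V| ≥ c^{-1} t^{1/2} β p^{-1}, then there exists a vertex v ∈ V with deg_{G_i}(v) ≥ (1−c)p|V| for every i ∈ [t]. -/
open Finset
open scoped Classical

/-- High minimum monochromatic degree vertex: in a family of
`(p,β)`-jumbled graphs on `V` with `|V| ≥ c⁻¹ √t β / p`, some vertex has degree at
least `(1−c)p|V|` in every graph of the family. -/
theorem exists_high_min_mono_degree {V : Type*} [Fintype V] {t : ℕ}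
    (𝒢 : Fin t → SimpleGraph V) (p β c : ℝ)
    (hc0 : 0 < c) (hc1 : c < 1) (hp0 : 0 < p) (hp1 : p < 1) (hβ : 1 ≤ β)
    (ht : 1 ≤ t) (hjum : ∀ i, IsJumbled (𝒢 i) p β)
    (hn : c⁻¹ * Real.sqrt t * β / p ≤ (Fintype.card V : ℝ)) :
    ∃ v : V, ∀ i : Fin t,
      (1 - c) * p * (Fintype.card V : ℝ) ≤ (monDegOn 𝒢 Finset.univ v i : ℝ) := by
  
  classical
  haveI : Nonempty (Fin t) := ⟨⟨0, ht⟩⟩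
  by_contra hcon
  push_neg at hcon
  set n : ℝ := (Fintype.card V : ℝ) with hndef
  have ht0 : (0:ℝ) < t := by exact_mod_cast Nat.lt_of_lt_of_le Nat.zero_lt_one ht
  have hst : (0:ℝ) < Real.sqrt t := Real.sqrt_pos.2 ht0
  have hbound : (0:ℝ) < c⁻¹ * Real.sqrt t * β / p :=
    div_pos (mul_pos (mul_pos (inv_pos.2 hc0) hst) (by linarith)) hp0
  have hn0 : 0 < n := lt_of_lt_of_le hbound hn
  set B : Fin t → Finset V := fun i =>
    univ.filter fun v => (monDegOn 𝒢 univ v i : ℝ) < (1 - c) * p * n with hBdef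
  have hcov : (Fintype.card V : ℝ) ≤ ∑ i : Fin t, ((B i).card : ℝ) := by
    have hsub : (univ : Finset V) ⊆ univ.biUnion B := by
      intro v _
      obtain ⟨i, hi⟩ := hcon v
      exact Finset.mem_biUnion.2 ⟨i, Finset.mem_univ _,
        Finset.mem_filter.2 ⟨Finset.mem_univ _, hi⟩⟩
    have h1 : Fintype.card V ≤ ∑ i : Fin t, (B i).card := by
      calc Fintype.card V = (univ : Finset V).card := (Finset.card_univ).symm
        _ ≤ (univ.biUnion B).card := Finset.card_le_card hsub
        _ ≤ ∑ i : Fin t, (B i).card := Finset.card_biUnion_le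
    exact_mod_cast h1
  have hex : ∃ i : Fin t, n / t ≤ ((B i).card : ℝ) := by
    by_contra hA
    push_neg at hA
    have hlt : ∑ i : Fin t, ((B i).card : ℝ) < ∑ _i : Fin t, n / t :=
      Finset.sum_lt_sum_of_nonempty Finset.univ_nonempty (fun i _ => hA i)
    rw [Finset.sum_const, Finset.card_univ, Fintype.card_fin, nsmul_eq_mul] at hlt
    have h2 : (t : ℝ) * (n / t) = n := by field_simp
    rw [h2] at hlt
    exact absurd hcov (not_le.2 hlt)
  obtain ⟨i, hi⟩ := hex
  set x : ℝ := ((B i).card : ℝ) with hxdef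
  have hx0 : 0 < x := lt_of_lt_of_le (div_pos hn0 ht0) hi
  have hBne : (B i).Nonempty := Finset.card_pos.1 (by rw [hxdef] at hx0; exact_mod_cast hx0)
  -- epairs as a sum of degrees
  have hsum : epairs (𝒢 i) (B i) univ = ∑ v ∈ B i, monDegOn 𝒢 univ v i := by
    unfold epairs monDegOn
    rw [Finset.card_filter, Finset.sum_product]
    simp only [Finset.card_filter]
  -- upper bound on epairs
  have hub : (epairs (𝒢 i) (B i) univ : ℝ) < (1 - c) * p * n * x := by
    have : (epairs (𝒢 i) (B i) univ : ℝ) = ∑ v ∈ B i, (monDegOn 𝒢 univ v i : ℝ) := by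
      rw [hsum]; push_cast; rfl
    rw [this]
    calc ∑ v ∈ B i, (monDegOn 𝒢 univ v i : ℝ)
        < ∑ _v ∈ B i, (1 - c) * p * n :=
          Finset.sum_lt_sum_of_nonempty hBne
            (fun v hv => (Finset.mem_filter.1 hv).2)
      _ = (1 - c) * p * n * x := by
          rw [Finset.sum_const, nsmul_eq_mul, hxdef]; ring
  -- lower bound from jumbledness
  have habs := hjum i (B i) univ
  have hcard : ((univ : Finset V).card : ℝ) = n := by
    rw [Finset.card_univ, hndef]
  rw [hcard] at habs
  have hlb : p * x * n - β * Real.sqrt (x * n) ≤ (epairs (𝒢 i) (B i) univ : ℝ) := by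
    have h := (abs_le.1 habs).1
    linarith
  have key : c * p * (x * n) < β * Real.sqrt (x * n) := by nlinarith
  set s : ℝ := Real.sqrt (x * n) with hsdef
  have hxn0 : (0:ℝ) < x * n := mul_pos hx0 hn0
  have hs0 : 0 < s := Real.sqrt_pos.2 hxn0
  have hs2 : s * s = x * n := Real.mul_self_sqrt hxn0.le
  have h2 : c * p * s < β := by
    have key' : (c * p * s) * s < β * s := by
      rw [show (c * p * s) * s = c * p * (s * s) by ring, hs2]; exact key
    exact lt_of_mul_lt_mul_right key' hs0.le
  -- s ≥ n / √t
  have hsge : n / Real.sqrt t ≤ s := by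
    have h3 : n ^ 2 / t ≤ x * n := by
      have := mul_le_mul_of_nonneg_right hi hn0.le
      calc n ^ 2 / t = (n / t) * n := by ring
        _ ≤ x * n := this
    have h4 : Real.sqrt (n ^ 2 / t) ≤ s := Real.sqrt_le_sqrt h3
    rwa [Real.sqrt_div (by positivity) , Real.sqrt_sq hn0.le] at h4
  have h3 : n ≤ s * Real.sqrt t := (div_le_iff₀ hst).1 hsge
  have h1 : Real.sqrt t * β ≤ c * p * n := by
    have hn' : c⁻¹ * Real.sqrt t * β ≤ n * p := (div_le_iff₀ hp0).1 hn
    calc Real.sqrt t * β = c * (c⁻¹ * Real.sqrt t * β) := by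
          field_simp
      _ ≤ c * (n * p) := mul_le_mul_of_nonneg_left hn' hc0.le
      _ = c * p * n := by ring
  nlinarith [mul_le_mul_of_nonneg_left h3 (mul_pos hc0 hp0).le]
end
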